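/- Let G be a finite abelian group of odd order, and suppose there exists a minimal zero-sum sequence U over G of length D(G) that is not squarefree. Then there exist g₁, g₂ ∈ G and minimal zero-sum sequences U₁, U₂ over G of length D(G) with g₁g₂ | U₁ and (g₁ + g₂) | U₂. -/

import Mathlib

def IsMinZS {G : Type*} [AddCommGroup G] (U : Multiset G) : Prop :=
  U ≠ 0 ∧ U.sum = 0 ∧ ∀ V ≤ U, V ≠ 0 → V.sum = 0 → V = U

noncomputable def DavC (G : Type*) [AddCommGroup G] : ℕ :=
  sSup {n | ∃ U : Multiset G, IsMinZS U ∧ U.card = n}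

def LSet {G : Type*} [AddCommGroup G] (A : Multiset G) : Set ℕ :=
  {k | ∃ l : Multiset (Multiset G), l.card = k ∧ (∀ U ∈ l, IsMinZS U) ∧ l.sum = A}

noncomputable def rhoSet (L : Set ℕ) : ℚ := ((sSup L : ℕ) : ℚ) / ((sInf L : ℕ) : ℚ)

def IsIntervalSet (L : Set ℕ) : Prop := L.Nonempty ∧ L = Set.Icc (sInf L) (sSup L)

lemma sum_map_addEquiv {G : Type*} [AddCommGroup G] (e : G ≃+ G) (U : Multiset G) :
    (U.map e).sum = e U.sum := (map_multiset_sum e.toAddMonoidHom U).symm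

lemma isMinZS_map {G : Type*} [AddCommGroup G] (e : G ≃+ G) {U : Multiset G}
    (hU : IsMinZS U) : IsMinZS (U.map e) := by
  obtain ⟨h0, hs, hmin⟩ := hU
  refine ⟨by simpa using h0, by rw [sum_map_addEquiv, hs, map_zero], ?_⟩
  intro V hVle hV0 hVs
  have hWle : V.map e.symm ≤ U := by
    have := Multiset.map_le_map (f := (e.symm : G → G)) hVle
    simpa [Multiset.map_map] using this
  have hW := hmin (V.map e.symm) hWle (by simpa using hV0)
    (by rw [sum_map_addEquiv, hVs, map_zero])
  have : (V.map e.symm).map e = U.map e := by rw [hW]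
  simpa [Multiset.map_map] using this

theorem stmt10 {G : Type*} [AddCommGroup G] [Fintype G] [DecidableEq G]
    (hodd : Odd (Fintype.card G))
    (U : Multiset G) (hU : IsMinZS U) (hcard : U.card = DavC G)
    (hnsf : U.toFinset.card ≠ U.card) :
    ∃ (g₁ g₂ : G) (U₁ U₂ : Multiset G),
      IsMinZS U₁ ∧ IsMinZS U₂ ∧ U₁.card = DavC G ∧ U₂.card = DavC G ∧
      ({g₁, g₂} : Multiset G) ≤ U₁ ∧ (g₁ + g₂) ∈ U₂ := by
  -- find an element of multiplicity ≥ 2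
  have hnd : ¬ U.Nodup := fun h => hnsf (Multiset.toFinset_card_of_nodup h)
  rw [Multiset.nodup_iff_count_le_one] at hnd
  push_neg at hnd
  obtain ⟨g, hg⟩ := hnd
  have hgg : ({g, g} : Multiset G) ≤ U := by
    rw [Multiset.le_iff_count]
    intro a
    by_cases ha : a = g
    · subst ha; simp; omega
    · simp [Multiset.count_cons, Multiset.count_singleton, ha]
  have hgmem : g ∈ U := by
    rw [← Multiset.count_pos]; omega
  -- the doubling automorphism
  have hbij : Function.Bijective ((AddMonoidHom.id G) + (AddMonoidHom.id G)) := by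
    have hinj : Function.Injective ((AddMonoidHom.id G) + (AddMonoidHom.id G)) := by
      rw [injective_iff_map_eq_zero]
      intro x hx
      have h2 : addOrderOf x ∣ 2 := addOrderOf_dvd_of_nsmul_eq_zero (by
        simpa [two_nsmul] using hx)
      have hc : addOrderOf x ∣ Fintype.card G := addOrderOf_dvd_card
      have h1 : addOrderOf x ∣ 1 := by
        have := Nat.dvd_gcd h2 hc
        rwa [Nat.coprime_two_left.mpr hodd] at this
      exact AddMonoid.addOrderOf_eq_one_iff.mp (Nat.eq_one_of_dvd_one h1)
    exact Finite.injective_iff_bijective.mp hinj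
  set e : G ≃+ G := AddEquiv.ofBijective _ hbij with he
  refine ⟨g, g, U, U.map e, hU, isMinZS_map e hU, hcard, by simpa using hcard, hgg, ?_⟩
  have : e g = g + g := rfl
  rw [← this]
  exact Multiset.mem_map_of_mem _ hgmem
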